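/- Let (d;a) = (d_1; a_0,…,a_n) be an h-regular pair with exactly one degree, where h is a positive integer, n ≥ 1, and a_i ∤ h for every i = 0,…,n. Then δ(d;a) ≥ F^h(a_0,…,a_n). -/

import Mathlib

open Finset

/-- The amplitude `δ` of the (sub)pair given by the degrees `d` indexed by `D`
and the weights `a` indexed by `A`. -/
def deltaOn {ι κ : Type*} (D : Finset ι) (d : ι → ℕ) (A : Finset κ) (a : κ → ℕ) : ℤ :=
  (∑ j ∈ D, (d j : ℤ)) - ∑ i ∈ A, (a i : ℤ)

/-- The amplitude of a full pair `(d;a)`. -/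
def deltaPair {ι κ : Type*} [Fintype ι] [Fintype κ] (d : ι → ℕ) (a : κ → ℕ) : ℤ :=
  deltaOn univ d univ a

/-- `h`-regularity of the (sub)pair given by the degrees `d` indexed by `D` and the
weights `a` indexed by `A`: for every nonempty subset `I ⊆ A` of the weight indices with
`a_I := gcd_{i ∈ I} a i > 1`, either there are `|I|` pairwise distinct degree indices
`p ∈ D` with `a_I ∣ d p`, or `a_I ∣ h`. -/
def IsHRegularOn {ι κ : Type*} (h : ℕ) (D : Finset ι) (d : ι → ℕ)
    (A : Finset κ) (a : κ → ℕ) : Prop :=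
  ∀ I : Finset κ, I ⊆ A → I.Nonempty → 1 < I.gcd a →
    (∃ P : Finset ι, P ⊆ D ∧ P.card = I.card ∧ ∀ j ∈ P, I.gcd a ∣ d j) ∨ I.gcd a ∣ h

/-- `h`-regularity of a full pair `(d;a)`. -/
def IsHRegularPair {ι κ : Type*} [Fintype ι] [Fintype κ] (h : ℕ) (d : ι → ℕ)
    (a : κ → ℕ) : Prop :=
  IsHRegularOn h univ d univ a

/-- The generalised `1/h`-Frobenius number `F^h` of the weights indexed by `A`.
Letting `g` be the gcd of the weights, this is the largest integer `z` divisible by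
`lcm g h` that is not a nonnegative integral combination of the weights; this agrees
with the renormalised definition `F^h = g * F^{h / gcd (g,h)} (a/g)`.  For `g = 1`
it is the largest multiple of `h` that is not a nonnegative integral combination of
the weights (so it equals `-h` if every positive multiple of `h` is such a combination),
and `frobOn 1 A a` is the ordinary Frobenius number `F` (so `F = -1` if some weight
equals `1`). -/
noncomputable def frobOn {κ : Type*} (h : ℕ) (A : Finset κ) (a : κ → ℕ) : ℤ :=
  sSup {z : ℤ | ((Nat.lcm (A.gcd a) h : ℕ) : ℤ) ∣ z ∧
    ¬ ∃ x : κ → ℕ, ((∑ i ∈ A, x i * a i : ℕ) : ℤ) = z}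

/-- The generalised `1/h`-Frobenius number `F^h` of a full tuple of weights. -/
noncomputable def frobNum {κ : Type*} [Fintype κ] (h : ℕ) (a : κ → ℕ) : ℤ :=
  frobOn h univ a

lemma sylv_coprime {m n : ℕ} (cop : Nat.Coprime m n) (hm : 0 < m) (hn : 0 < n)
    (z : ℕ) (hz : m * n < z + m + n) : ∃ x y : ℕ, x * m + y * n = z := by
  rcases eq_or_lt_of_le (show 1 ≤ m from hm) with hm1 | hm1
  · exact ⟨z, 0, by rw [← hm1]; simp⟩
  rcases eq_or_lt_of_le (show 1 ≤ n from hn) with hn1 | hn1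
  · exact ⟨0, z, by rw [← hn1]; simp⟩
  have hfr := frobeniusNumber_pair cop hm1 hn1
  have hmn : m + n ≤ m * n := Nat.add_le_mul hm1 hn1
  have hmem : z ∈ AddSubmonoid.closure ({m, n} : Set ℕ) := by
    by_contra hc
    have := hfr.2 hc
    omega
  obtain ⟨x, y, hxy⟩ := (AddSubmonoid.mem_closure_pair m n z).1 hmem
  exact ⟨x, y, by simpa [smul_eq_mul] using hxy⟩

lemma sylv_pair {a b : ℕ} (ha : 0 < a) (hb : 0 < b) (z : ℕ) (hdvd : Nat.gcd a b ∣ z)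
    (hz : Nat.lcm a b < z + a + b) : ∃ x y : ℕ, x * a + y * b = z := by
  set g := Nat.gcd a b with hg
  have hg0 : 0 < g := Nat.gcd_pos_of_pos_left _ ha
  obtain ⟨a', ha'⟩ : g ∣ a := Nat.gcd_dvd_left a b
  obtain ⟨b', hb'⟩ : g ∣ b := Nat.gcd_dvd_right a b
  obtain ⟨z', hz'⟩ := hdvd
  have cop : Nat.Coprime a' b' := by
    have := Nat.coprime_div_gcd_div_gcd (m := a) (n := b) hg0
    rwa [← hg, ha', hb', Nat.mul_div_cancel_left _ hg0, Nat.mul_div_cancel_left _ hg0] at this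
  have hlcm : Nat.lcm a b = g * (a' * b') := by
    have h1 : g * Nat.lcm a b = g * (g * (a' * b')) := by
      calc g * Nat.lcm a b = a * b := Nat.gcd_mul_lcm a b
      _ = g * (g * (a' * b')) := by rw [ha', hb']; ring
    exact Nat.eq_of_mul_eq_mul_left hg0 h1
  have ha'0 : 0 < a' := by nlinarith
  have hb'0 : 0 < b' := by nlinarith
  have hlt : a' * b' < z' + a' + b' := by
    have : g * (a' * b') < g * (z' + a' + b') := by
      rw [← hlcm]
      calc Nat.lcm a b < z + a + b := hz
      _ = g * (z' + a' + b') := by rw [ha', hb', hz']; ring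
    exact Nat.lt_of_mul_lt_mul_left this
  obtain ⟨x, y, hxy⟩ := sylv_coprime cop ha'0 hb'0 z' hlt
  exact ⟨x, y, by rw [ha', hb', hz', ← hxy]; ring⟩

lemma finset_lcm_ne_zero {κ : Type*} {A : Finset κ} {a : κ → ℕ}
    (h0 : ∀ i ∈ A, 0 < a i) : A.lcm a ≠ 0 := by
  intro hz
  obtain ⟨i, hi, hia⟩ := Finset.lcm_eq_zero_iff.mp hz
  exact (h0 i (by exact_mod_cast hi)).ne' hia

lemma exists_pow_dvd_of_pow_dvd_lcm {κ : Type*} [DecidableEq κ] {a : κ → ℕ} {p k : ℕ}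
    (hp : p.Prime) (hk : 0 < k) :
    ∀ {B : Finset κ}, (∀ i ∈ B, 0 < a i) → p ^ k ∣ B.lcm a → ∃ i ∈ B, p ^ k ∣ a i := by
  intro B
  induction B using Finset.induction with
  | empty =>
    intro _ hdvd
    rw [Finset.lcm_empty] at hdvd
    have h1 : p ^ k = 1 := Nat.eq_one_of_dvd_one hdvd
    have h2 : 1 < p ^ k := Nat.one_lt_pow hk.ne' hp.one_lt
    omega
  | @insert j B hjB ih =>
    intro h0 hdvd
    rw [Finset.lcm_insert] at hdvd
    have hj0 : a j ≠ 0 := (h0 j (Finset.mem_insert_self _ _)).ne'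
    have hB0 : B.lcm a ≠ 0 := finset_lcm_ne_zero (fun i hi => h0 i (Finset.mem_insert_of_mem hi))
    have hl0 : Nat.lcm (a j) (B.lcm a) ≠ 0 := Nat.lcm_ne_zero hj0 hB0
    have hle : k ≤ (Nat.lcm (a j) (B.lcm a)).factorization p :=
      (hp.pow_dvd_iff_le_factorization hl0).mp hdvd
    rw [Nat.factorization_lcm hj0 hB0, Finsupp.sup_apply] at hle
    rcases le_sup_iff.mp hle with hle | hle
    · exact ⟨j, Finset.mem_insert_self _ _, (hp.pow_dvd_iff_le_factorization hj0).mpr hle⟩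
    · obtain ⟨i, hi, hdi⟩ := ih (fun i hi => h0 i (Finset.mem_insert_of_mem hi))
        ((hp.pow_dvd_iff_le_factorization hB0).mpr hle)
      exact ⟨i, Finset.mem_insert_of_mem hi, hdi⟩

lemma dvd_of_dvd_lcm {κ : Type*} [DecidableEq κ] {h : ℕ} {a : κ → ℕ} {m : ℕ} {B : Finset κ}
    (h0 : ∀ i ∈ B, 0 < a i) (hgcd : ∀ i ∈ B, Nat.gcd m (a i) ∣ h)
    (hdvd : m ∣ B.lcm a) : m ∣ h := by
  rw [Nat.dvd_iff_prime_pow_dvd_dvd]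
  intro p k hp hpk
  rcases Nat.eq_zero_or_pos k with rfl | hk
  · simpa using one_dvd h
  obtain ⟨i, hi, hdi⟩ := exists_pow_dvd_of_pow_dvd_lcm hp hk h0
    (hpk.trans hdvd)
  exact dvd_trans (Nat.dvd_gcd hpk hdi) (hgcd i hi)

lemma two_mul_le_lcm {h a b : ℕ} (ha0 : 0 < a) (hb : 0 < b) (hgcd : Nat.gcd a b ∣ h)
    (hna : ¬ a ∣ h) : 2 * b ≤ Nat.lcm a b := by
  set g := Nat.gcd a b with hg
  have hg0 : 0 < g := Nat.gcd_pos_of_pos_left _ ha0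
  have hne : g ≠ a := fun e => hna (e ▸ hgcd)
  have h2 : 2 * g ≤ a := by
    obtain ⟨t, ht⟩ : g ∣ a := Nat.gcd_dvd_left a b
    have ht1 : t ≠ 1 := by rintro rfl; simp at ht; exact hne ht.symm
    have ht0 : t ≠ 0 := by rintro rfl; omega
    have h2t : 2 ≤ t := by omega
    calc 2 * g = g * 2 := by ring
    _ ≤ g * t := Nat.mul_le_mul_left _ h2t
    _ = a := ht.symm
  have hml : g * Nat.lcm a b = a * b := by rw [hg]; exact Nat.gcd_mul_lcm a b
  have : g * (2 * b) ≤ g * Nat.lcm a b := by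
    calc g * (2 * b) = (2 * g) * b := by ring
    _ ≤ a * b := Nat.mul_le_mul h2 (le_refl b)
    _ = g * Nat.lcm a b := hml.symm
  exact Nat.le_of_mul_le_mul_left this hg0

lemma erase_lcm_add_le {κ : Type*} [DecidableEq κ] {h : ℕ} {A : Finset κ} {a : κ → ℕ}
    (hpos : ∀ i ∈ A, 0 < a i) (hnd : ∀ i ∈ A, ¬ a i ∣ h)
    (hpair : ∀ i ∈ A, ∀ j ∈ A, i ≠ j → Nat.gcd (a i) (a j) ∣ h)
    {j : κ} (hj : j ∈ A) (hcard : 2 ≤ A.card) :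
    (A.erase j).lcm a + a j ≤ A.lcm a := by
  have hBne : (A.erase j).Nonempty := by
    rw [← Finset.card_pos, Finset.card_erase_of_mem hj]; omega
  obtain ⟨i0, hi0B⟩ := hBne
  have hi0A : i0 ∈ A := Finset.mem_of_mem_erase hi0B
  have hi0j : i0 ≠ j := Finset.ne_of_mem_erase hi0B
  have hposB : ∀ i ∈ A.erase j, 0 < a i := fun i hi => hpos i (Finset.mem_of_mem_erase hi)
  have hlcmB0 : (A.erase j).lcm a ≠ 0 := finset_lcm_ne_zero hposB
  have hlcmA0 : A.lcm a ≠ 0 := finset_lcm_ne_zero hpos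
  have hndvd : ¬ a j ∣ (A.erase j).lcm a := by
    intro hdvd
    exact hnd j hj (dvd_of_dvd_lcm hposB
      (fun i hi => hpair j hj i (Finset.mem_of_mem_erase hi)
        (fun e => Finset.ne_of_mem_erase hi e.symm)) hdvd)
  have h2B : 2 * (A.erase j).lcm a ≤ A.lcm a := by
    obtain ⟨c, hc⟩ : (A.erase j).lcm a ∣ A.lcm a :=
      Finset.lcm_dvd fun i hi => Finset.dvd_lcm (Finset.mem_of_mem_erase hi)
    have hc0 : c ≠ 0 := by rintro rfl; rw [mul_zero] at hc; exact hlcmA0 hc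
    have hc1 : c ≠ 1 := by
      rintro rfl
      rw [mul_one] at hc
      exact hndvd (hc ▸ Finset.dvd_lcm hj)
    calc 2 * (A.erase j).lcm a = (A.erase j).lcm a * 2 := by ring
    _ ≤ (A.erase j).lcm a * c := Nat.mul_le_mul_left _ (by omega)
    _ = A.lcm a := hc.symm
  have h2j : 2 * a j ≤ A.lcm a := by
    have hl : Nat.lcm (a i0) (a j) ∣ A.lcm a :=
      Nat.lcm_dvd (Finset.dvd_lcm hi0A) (Finset.dvd_lcm hj)
    have h1 : 2 * a j ≤ Nat.lcm (a i0) (a j) :=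
      two_mul_le_lcm (hpos i0 hi0A) (hpos j hj) (hpair i0 hi0A j hj hi0j) (hnd i0 hi0A)
    exact h1.trans (Nat.le_of_dvd (Nat.pos_of_ne_zero hlcmA0) hl)
  omega

lemma sum_le_lcm {κ : Type*} [DecidableEq κ] {h : ℕ} (a : κ → ℕ) :
    ∀ A : Finset κ, A.Nonempty → (∀ i ∈ A, 0 < a i) → (∀ i ∈ A, ¬ a i ∣ h) →
    (∀ i ∈ A, ∀ j ∈ A, i ≠ j → Nat.gcd (a i) (a j) ∣ h) →
    ∑ i ∈ A, a i ≤ A.lcm a := by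
  intro A
  induction A using Finset.strongInduction with
  | _ A ih =>
    intro hne hpos hnd hpair
    rcases eq_or_lt_of_le (show 1 ≤ A.card from Finset.Nonempty.card_pos hne) with h1 | h2
    · obtain ⟨i, rfl⟩ := Finset.card_eq_one.mp h1.symm
      rw [Finset.sum_singleton]
      exact Nat.le_of_dvd (Nat.pos_of_ne_zero (finset_lcm_ne_zero hpos))
        (Finset.dvd_lcm (Finset.mem_singleton_self i))
    · obtain ⟨j, hj⟩ := hne
      have hkey := erase_lcm_add_le hpos hnd hpair hj h2
      have hsum : ∑ i ∈ A.erase j, a i + a j = ∑ i ∈ A, a i := Finset.sum_erase_add A a hj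
      have hBne : (A.erase j).Nonempty := by
        rw [← Finset.card_pos, Finset.card_erase_of_mem hj]; omega
      have hIH := ih (A.erase j) (Finset.erase_ssubset hj) hBne
        (fun i hi => hpos i (Finset.mem_of_mem_erase hi))
        (fun i hi => hnd i (Finset.mem_of_mem_erase hi))
        (fun i hi k hk hik => hpair i (Finset.mem_of_mem_erase hi) k (Finset.mem_of_mem_erase hk) hik)
      omega

lemma rep_of_lt {κ : Type*} [DecidableEq κ] {h : ℕ} (a : κ → ℕ) :
    ∀ A : Finset κ, 2 ≤ A.card → (∀ i ∈ A, 0 < a i) → (∀ i ∈ A, ¬ a i ∣ h) →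
    (∀ i ∈ A, ∀ j ∈ A, i ≠ j → Nat.gcd (a i) (a j) ∣ h) →
    ∀ z : ℕ, h ∣ z → A.lcm a < z + ∑ i ∈ A, a i →
    ∃ x : κ → ℕ, ∑ i ∈ A, x i * a i = z := by
  intro A
  induction A using Finset.strongInduction with
  | _ A ih =>
    intro hcard hpos hnd hpair z hz hlt
    rcases eq_or_lt_of_le hcard with h2 | h3
    · -- |A| = 2
      obtain ⟨i, j, hij, rfl⟩ := Finset.card_eq_two.mp h2.symm
      have hiA : i ∈ ({i, j} : Finset κ) := by simp
      have hjA : j ∈ ({i, j} : Finset κ) := by simp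
      have hgd : Nat.gcd (a i) (a j) ∣ z := (hpair i hiA j hjA hij).trans hz
      have hsum : ∑ k ∈ ({i, j} : Finset κ), a k = a i + a j := Finset.sum_pair hij
      have hldvd : Nat.lcm (a i) (a j) ∣ ({i, j} : Finset κ).lcm a :=
        Nat.lcm_dvd (Finset.dvd_lcm hiA) (Finset.dvd_lcm hjA)
      have hlle : Nat.lcm (a i) (a j) ≤ ({i, j} : Finset κ).lcm a :=
        Nat.le_of_dvd (Nat.pos_of_ne_zero (finset_lcm_ne_zero hpos)) hldvd
      obtain ⟨x, y, hxy⟩ := sylv_pair (hpos i hiA) (hpos j hjA) z hgd (by omega)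
      refine ⟨fun k => if k = i then x else if k = j then y else 0, ?_⟩
      rw [Finset.sum_pair hij]
      simp only [if_pos rfl, if_neg (Ne.symm hij)]
      exact hxy
    · -- |A| ≥ 3
      obtain ⟨j, hj⟩ : A.Nonempty := Finset.card_pos.mp (by omega)
      have hkey := erase_lcm_add_le hpos hnd hpair hj hcard
      have hsum : ∑ i ∈ A.erase j, a i + a j = ∑ i ∈ A, a i := Finset.sum_erase_add A a hj
      have hBcard : 2 ≤ (A.erase j).card := by rw [Finset.card_erase_of_mem hj]; omega
      obtain ⟨x, hx⟩ := ih (A.erase j) (Finset.erase_ssubset hj) hBcard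
        (fun i hi => hpos i (Finset.mem_of_mem_erase hi))
        (fun i hi => hnd i (Finset.mem_of_mem_erase hi))
        (fun i hi k hk hik => hpair i (Finset.mem_of_mem_erase hi) k (Finset.mem_of_mem_erase hk) hik)
        z hz (by omega)
      refine ⟨Function.update x j 0, ?_⟩
      rw [← Finset.sum_erase_add A _ hj]
      have hcongr : ∑ i ∈ A.erase j, Function.update x j 0 i * a i = ∑ i ∈ A.erase j, x i * a i :=
        Finset.sum_congr rfl fun i hi => by
          rw [Function.update_of_ne (Finset.ne_of_mem_erase hi)]
      rw [hcongr, hx, Function.update_self]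
      simp

/-- **Theorem (codimension 1, `1/h`-Frobenius bound).**
If `(d;a) = (d₁; a₀,…,aₙ)` is an `h`-regular pair with exactly one degree, `n ≥ 1`, and
`aᵢ ∤ h` for all `i`, then `δ(d;a) ≥ F^h(a₀,…,aₙ)`. -/
theorem codim_one_frobenius_bound (h n : ℕ) (hh : 0 < h) (hn : 1 ≤ n)
    (d : Fin 1 → ℕ) (a : Fin (n + 1) → ℕ)
    (hd : ∀ j, 0 < d j) (ha : ∀ i, 0 < a i)
    (hreg : IsHRegularPair h d a) (hnd : ∀ i, ¬ a i ∣ h) :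
    deltaPair d a ≥ frobNum h a := by
  classical
  -- each weight is ≥ 2
  have ha2 : ∀ i, 2 ≤ a i := by
    intro i
    have h1 : a i ≠ 1 := fun e => hnd i (e ▸ one_dvd h)
    have := ha i
    omega
  -- each weight divides d 0
  have hdvd : ∀ i, a i ∣ d 0 := by
    intro i
    have hgs : ({i} : Finset (Fin (n + 1))).gcd a = a i := by simp
    have hgt : 1 < ({i} : Finset (Fin (n + 1))).gcd a := by rw [hgs]; exact ha2 i
    rcases hreg {i} (Finset.subset_univ _) ⟨i, Finset.mem_singleton_self i⟩ hgt with
      ⟨P, _, hPcard, hPdvd⟩ | hdh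
    · rw [Finset.card_singleton] at hPcard
      obtain ⟨p, hp⟩ := Finset.card_eq_one.mp hPcard
      have hdp := hPdvd p (by rw [hp]; exact Finset.mem_singleton_self p)
      rw [hgs] at hdp
      have hp0 : p = 0 := Subsingleton.elim p 0
      rwa [hp0] at hdp
    · rw [hgs] at hdh
      exact absurd hdh (hnd i)
  -- pairwise gcds divide h
  have hpair : ∀ i j : Fin (n + 1), i ≠ j → Nat.gcd (a i) (a j) ∣ h := by
    intro i j hij
    have hgp : ({i, j} : Finset (Fin (n + 1))).gcd a = Nat.gcd (a i) (a j) := by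
      rw [Finset.gcd_insert, Finset.gcd_singleton]
      have hnz : normalize (a j) = a j := by simp
      rw [hnz]
      rfl
    by_cases h1 : 1 < ({i, j} : Finset (Fin (n + 1))).gcd a
    · rcases hreg {i, j} (Finset.subset_univ _) ⟨i, by simp⟩ h1 with
        ⟨P, hPsub, hPcard, _⟩ | hdh
      · exfalso
        have hc2 : ({i, j} : Finset (Fin (n + 1))).card = 2 := Finset.card_pair hij
        have hle := Finset.card_le_card hPsub
        rw [Finset.card_univ, Fintype.card_fin] at hle
        omega
      · rwa [hgp] at hdh
    · rw [hgp] at h1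
      have h0 : Nat.gcd (a i) (a j) ≠ 0 := (Nat.gcd_pos_of_pos_left _ (ha i)).ne'
      have : Nat.gcd (a i) (a j) = 1 := by omega
      simp [this]
  -- the gcd of all weights divides h
  have hguniv : (univ : Finset (Fin (n + 1))).gcd a ∣ h := by
    by_cases h1 : 1 < (univ : Finset (Fin (n + 1))).gcd a
    · rcases hreg univ (Finset.subset_univ _) univ_nonempty h1 with
        ⟨P, hPsub, hPcard, _⟩ | hdh
      · exfalso
        have hle := Finset.card_le_card hPsub
        rw [Finset.card_univ, Fintype.card_fin] at hle
        rw [Finset.card_univ, Fintype.card_fin] at hPcard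
        omega
      · exact hdh
    · have h0 : (univ : Finset (Fin (n + 1))).gcd a ≠ 0 := by
        intro e
        exact (ha 0).ne' (Finset.gcd_eq_zero_iff.mp e 0 (Finset.mem_univ 0))
      have : (univ : Finset (Fin (n + 1))).gcd a = 1 := by omega
      simp [this]
  have hL : Nat.lcm ((univ : Finset (Fin (n + 1))).gcd a) h = h :=
    Nat.dvd_antisymm (Nat.lcm_dvd hguniv dvd_rfl) (Nat.dvd_lcm_right _ _)
  -- basic size facts
  have hlcmle : (univ : Finset (Fin (n + 1))).lcm a ≤ d 0 :=
    Nat.le_of_dvd (hd 0) (Finset.lcm_dvd fun i _ => hdvd i)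
  have hsumle : ∑ i, a i ≤ (univ : Finset (Fin (n + 1))).lcm a :=
    sum_le_lcm (h := h) a univ univ_nonempty (fun i _ => ha i) (fun i _ => hnd i)
      (fun i _ j _ hij => hpair i j hij)
  have hdelta : deltaPair d a = (d 0 : ℤ) - ((∑ i, a i : ℕ) : ℤ) := by
    rw [deltaPair, deltaOn]
    push_cast
    rw [Fin.sum_univ_one]
  rw [frobNum, frobOn, ge_iff_le]
  apply csSup_le
  · refine ⟨-(h : ℤ), ?_, ?_⟩
    · rw [hL]
      exact dvd_neg.mpr dvd_rfl
    · rintro ⟨x, hx⟩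
      have h1 : (0 : ℤ) ≤ ((∑ i, x i * a i : ℕ) : ℤ) := Int.natCast_nonneg _
      have h2 : (0 : ℤ) < (h : ℤ) := Int.natCast_pos.mpr hh
      omega
  · rintro z ⟨hzd, hznr⟩
    rw [hL] at hzd
    by_contra hc
    push_neg at hc
    rw [hdelta] at hc
    have hca : ((∑ i, a i : ℕ) : ℤ) ≤ (((univ : Finset (Fin (n + 1))).lcm a : ℕ) : ℤ) := by
      exact_mod_cast hsumle
    have hcb : (((univ : Finset (Fin (n + 1))).lcm a : ℕ) : ℤ) ≤ (d 0 : ℤ) := by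
      exact_mod_cast hlcmle
    have hz0 : 0 ≤ z := by omega
    obtain ⟨m, rfl⟩ := Int.eq_ofNat_of_zero_le hz0
    have hhm : h ∣ m := by exact_mod_cast hzd
    have hlt : (univ : Finset (Fin (n + 1))).lcm a < m + ∑ i, a i := by
      have : (((univ : Finset (Fin (n + 1))).lcm a : ℕ) : ℤ) < (m : ℤ) + ((∑ i, a i : ℕ) : ℤ) := by
        omega
      exact_mod_cast this
    obtain ⟨x, hx⟩ := rep_of_lt (h := h) a univ
      (by rw [Finset.card_univ, Fintype.card_fin]; omega)
      (fun i _ => ha i) (fun i _ => hnd i) (fun i _ j _ hij => hpair i j hij)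
      m hhm hlt
    exact hznr ⟨x, by exact_mod_cast hx⟩
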